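/- For any cutting of a pizza into n slices, Alice has a zero-jump strategy with gain |P|/3: if n is even she gains |P|/2 ≥ |P|/3, and if n is odd, the potential p(V) of the characteristic cycle satisfies p(V) ≥ |V|/3, and Alice gains at least p(V) by taking an element of maximum potential and then making only shifts. -/

import Mathlib

open Fin.NatCast

/-- Adjacency of slices on the circular pizza with `n` slices. -/
def adj (n : ℕ) (i j : Fin n) : Prop :=
  (i.1 + 1) % n = j.1 ∨ (j.1 + 1) % n = i.1

instance (n : ℕ) (i j : Fin n) : Decidable (adj n i j) := by
  unfold adj; infer_instance

/-- `h` lists the slices taken so far, in the order they were taken.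
It is a valid (partial) play of the Polite Pizza Protocol if no slice is taken
twice and every slice except the first is adjacent to a previously taken one. -/
def ValidHist (n : ℕ) (h : List (Fin n)) : Prop :=
  h.Nodup ∧ ∀ (k : ℕ) (hk : k < h.length), 0 < k →
    ∃ (j : ℕ) (hj : j < k), adj n (h.get ⟨k, hk⟩) (h.get ⟨j, hj.trans hk⟩)

/-- `m` is a legal next slice after history `h`. -/
def ValidMove (n : ℕ) (h : List (Fin n)) (m : Fin n) : Prop :=
  m ∉ h ∧ (h = [] ∨ ∃ x ∈ h, adj n m x)

/-- Total size of the slices taken at (0-based) turns satisfying `f`. -/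
def gainOn (n : ℕ) (P : Fin n → ℝ) (f : ℕ → Bool) (l : List (Fin n)) : ℝ :=
  (((l.zipIdx.map Prod.swap).filter (fun p => f p.1)).map (fun p => P p.2)).sum

/-- Alice moves at even turns (0-based), Bob at odd turns. -/
def isAlice (k : ℕ) : Bool := k % 2 == 0
def isBob (k : ℕ) : Bool := k % 2 == 1

def aliceGain (n : ℕ) (P : Fin n → ℝ) (l : List (Fin n)) : ℝ := gainOn n P isAlice l
def bobGain (n : ℕ) (P : Fin n → ℝ) (l : List (Fin n)) : ℝ := gainOn n P isBob l

/-- The play `l` is consistent with the strategy `s` used at the turns satisfying `f`. -/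
def Consistent (n : ℕ) (f : ℕ → Bool) (s : List (Fin n) → Fin n) (l : List (Fin n)) : Prop :=
  ∀ (k : ℕ) (hk : k < l.length), f k → l.get ⟨k, hk⟩ = s (l.take k)

/-- The strategy `s`, used at turns satisfying `f`, always produces legal moves. -/
def Legal (n : ℕ) (f : ℕ → Bool) (s : List (Fin n) → Fin n) : Prop :=
  ∀ h, ValidHist n h → h.length < n → f h.length → ValidMove n h (s h)

/-- Number of jumps made at turns satisfying `f` during the play `l`:
turn `k ≥ 1` is a jump if the slice taken is not adjacent to the one taken at turn `k-1`. -/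
def jumpCount (n : ℕ) (f : ℕ → Bool) (l : List (Fin n)) : ℕ :=
  (((l.zip l.tail).zipIdx.map Prod.swap).filter
    (fun p => f (p.1 + 1) && !(decide (adj n p.2.2 p.2.1)))).length

/-- Alice has a strategy making at most `j` jumps and guaranteeing her
slices of total size at least `g`. -/
def AliceJGain (n : ℕ) (P : Fin n → ℝ) (j : ℕ) (g : ℝ) : Prop :=
  ∃ s : List (Fin n) → Fin n, Legal n isAlice s ∧
    ∀ l : List (Fin n), ValidHist n l → l.length = n → Consistent n isAlice s l →
      g ≤ aliceGain n P l ∧ jumpCount n isAlice l ≤ j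

/-- Alice has a strategy guaranteeing her slices of total size at least `g`. -/
def AliceGain' (n : ℕ) (P : Fin n → ℝ) (g : ℝ) : Prop :=
  ∃ s : List (Fin n) → Fin n, Legal n isAlice s ∧
    ∀ l : List (Fin n), ValidHist n l → l.length = n → Consistent n isAlice s l →
      g ≤ aliceGain n P l

/-- Bob (moving second) has a strategy guaranteeing him slices of total size at least `g`. -/
def BobGain' (n : ℕ) (P : Fin n → ℝ) (g : ℝ) : Prop :=
  ∃ s : List (Fin n) → Fin n, Legal n isBob s ∧
    ∀ l : List (Fin n), ValidHist n l → l.length = n → Consistent n isBob s l →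
      g ≤ bobGain n P l
/-- The arc of `l` consecutive elements of the circular sequence on `Fin n`
starting at `s`. -/
def arcSet (n : ℕ) [NeZero n] (s : Fin n) (l : ℕ) : Finset (Fin n) :=
  (Finset.range l).image (fun k : ℕ => s + (k : Fin n))

/-- The size (total weight) of the arc of length `l` starting at `s`. -/
def arcSum (n : ℕ) [NeZero n] (V : Fin n → ℝ) (s : Fin n) (l : ℕ) : ℝ :=
  ∑ k ∈ Finset.range l, V (s + (k : Fin n))

/-- Length of a half-circle: `(n+1)/2`. -/
def hcLen (n : ℕ) : ℕ := (n + 1) / 2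

/-- The half-circle (arc of `(n+1)/2` consecutive elements) starting at `s`. -/
def hcSet (n : ℕ) [NeZero n] (s : Fin n) : Finset (Fin n) := arcSet n s (hcLen n)

/-- The size of the half-circle starting at `s`. -/
def hcSum (n : ℕ) [NeZero n] (V : Fin n → ℝ) (s : Fin n) : ℝ := arcSum n V s (hcLen n)

/-- The potential of an element `v`: the minimum size of a half-circle covering `v`. -/
noncomputable def pot (n : ℕ) [NeZero n] (V : Fin n → ℝ) (v : Fin n) : ℝ :=
  sInf {x : ℝ | ∃ s : Fin n, v ∈ hcSet n s ∧ x = hcSum n V s}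

/-- The potential `p(V)` of the circular sequence: the maximum potential of an element. -/
noncomputable def potV (n : ℕ) [NeZero n] (V : Fin n → ℝ) : ℝ :=
  sSup {x : ℝ | ∃ v : Fin n, x = pot n V v}

/-- A minimal covering triple of half-circles: the three half-circles cover everything,
`s1` has minimum size among all half-circles, all three have size at most `p(V)`, and
none of them can be replaced by a half-circle of strictly smaller size keeping the
covering property. -/
def MinTriple (n : ℕ) [NeZero n] (V : Fin n → ℝ) (s1 s2 s3 : Fin n) : Prop :=
  hcSet n s1 ∪ hcSet n s2 ∪ hcSet n s3 = Finset.univ ∧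
  (∀ t, hcSum n V s1 ≤ hcSum n V t) ∧
  hcSum n V s1 ≤ potV n V ∧ hcSum n V s2 ≤ potV n V ∧ hcSum n V s3 ≤ potV n V ∧
  (∀ t, hcSet n t ∪ hcSet n s2 ∪ hcSet n s3 = Finset.univ → hcSum n V s1 ≤ hcSum n V t) ∧
  (∀ t, hcSet n s1 ∪ hcSet n t ∪ hcSet n s3 = Finset.univ → hcSum n V s2 ≤ hcSum n V t) ∧
  (∀ t, hcSet n s1 ∪ hcSet n s2 ∪ hcSet n t = Finset.univ → hcSum n V s3 ≤ hcSum n V t)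

/-- The partition of the circular sequence into six consecutive arcs `A,…,F`
(of lengths `lA,…,lF`, starting at `s0`) such that the half-circles of the triple
`(s1,s2,s3)` are `ABC`, `CDE` and `EFA`. -/
def TriplePartition (n : ℕ) [NeZero n] (s1 s2 s3 s0 : Fin n)
    (lA lB lC lD lE lF : ℕ) : Prop :=
  lA + lB + lC + lD + lE + lF = n ∧
  lA = lD + 1 ∧ lC = lF + 1 ∧ lE = lB + 1 ∧ 2 ≤ lA ∧ 2 ≤ lC ∧ 2 ≤ lE ∧
  hcSet n s1 = arcSet n s0 (lA + lB + lC) ∧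
  hcSet n s2 = arcSet n (s0 + ((lA + lB : ℕ) : Fin n)) (lC + lD + lE) ∧
  hcSet n s3 = arcSet n (s0 + ((lA + lB + lC + lD : ℕ) : Fin n)) (lE + lF + lA)


namespace PizzaAux

open Fin.CommRing


lemma fin_intCast_eq_iff {n : ℕ} [NeZero n] (c d : ℤ) : ((c : Fin n) = (d : Fin n)) ↔ (n:ℤ) ∣ (c - d) := by
  rw [← sub_eq_zero, ← Int.cast_sub, CharP.intCast_eq_zero_iff (Fin n) n]

lemma int_eq_of_dvd_of_lt {n : ℕ} {c d : ℤ} (h : (n:ℤ) ∣ c - d) (h2 : |c - d| < n) : c = d := by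
  rcases h with ⟨t, ht⟩
  rcases eq_or_ne t 0 with rfl | ht0
  · omega
  · exfalso
    have h1 : (1:ℤ) ≤ |t| := Int.one_le_abs (by omega)
    have : |c - d| = (n:ℤ) * |t| := by rw [ht, abs_mul, abs_of_nonneg (by positivity : (0:ℤ) ≤ (n:ℤ))]
    nlinarith [abs_nonneg (c-d)]

lemma fin_intCast_eq_of_eq {n : ℕ} [NeZero n] {c d : ℤ} (h : ((c : Fin n) = (d : Fin n)))
    (h2 : |c - d| < n) : c = d :=
  int_eq_of_dvd_of_lt ((fin_intCast_eq_iff c d).1 h) h2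

lemma hcLen_le {n : ℕ} (hn : 0 < n) : hcLen n ≤ n := by unfold hcLen; omega

lemma hcSum_eq_sum {n : ℕ} [NeZero n] (V : Fin n → ℝ) (s : Fin n) :
    ∑ x ∈ hcSet n s, V x = hcSum n V s := by
  refine Finset.sum_image ?_
  intro k1 h1 k2 h2 he
  have h1' : k1 < n := lt_of_lt_of_le (Finset.mem_range.1 h1) (hcLen_le n.pos_of_neZero)
  have h2' : k2 < n := lt_of_lt_of_le (Finset.mem_range.1 h2) (hcLen_le n.pos_of_neZero)
  have : (k1 : Fin n) = (k2 : Fin n) := by exact add_left_cancel he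
  have := congrArg Fin.val this
  rwa [Fin.val_cast_of_lt h1', Fin.val_cast_of_lt h2'] at this

lemma sum_union_le {n : ℕ} [NeZero n] (V : Fin n → ℝ) (hV : ∀ i, 0 ≤ V i) (s t : Finset (Fin n)) :
    ∑ x ∈ s ∪ t, V x ≤ ∑ x ∈ s, V x + ∑ x ∈ t, V x := by
  have h := Finset.sum_union_inter (s₁ := s) (s₂ := t) (f := V)
  have : 0 ≤ ∑ x ∈ s ∩ t, V x := Finset.sum_nonneg (fun i _ => hV i)
  linarith

lemma mem_hcSet_iff {n : ℕ} [NeZero n] {x s : Fin n} :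
    x ∈ hcSet n s ↔ ∃ k : ℕ, k < hcLen n ∧ x = s + (k : Fin n) := by
  simp [hcSet, arcSet, Finset.mem_image, eq_comm]

/-- there is an element all of whose covering half-circles are heavy -/
lemma exists_good (n : ℕ) [NeZero n] (V : Fin n → ℝ) (hV : ∀ i, 0 ≤ V i) :
    ∃ w : Fin n, ∀ s : Fin n, w ∈ hcSet n s → (∑ i, V i) / 3 ≤ hcSum n V s := by
  by_contra hcon
  push_neg at hcon
  set S3 : ℝ := (∑ i, V i) / 3 with hS3
  have hn : 0 < n := n.pos_of_neZero
  -- bad points in ℤ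
  set bad : ℤ → Prop := fun z => hcSum n V ((z : ℤ) : Fin n) < S3 with hbad
  have H : ∀ z : ℤ, ∃ k : ℕ, k < hcLen n ∧ bad (z - k) := by
    intro z
    obtain ⟨s, hs, hlt⟩ := hcon ((z : ℤ) : Fin n)
    obtain ⟨k, hk, he⟩ := mem_hcSet_iff.1 hs
    refine ⟨k, hk, ?_⟩
    have : ((z - k : ℤ) : Fin n) = s := by
      have : s = ((z : ℤ) : Fin n) - (k : Fin n) := by rw [he]; ring
      rw [this]; push_cast; ring
    rw [hbad]; simp only [this]; exact hlt
  classical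
  have hml : hcLen n = (n+1)/2 := rfl
  obtain ⟨k1, hk1, hbad1⟩ := H 0
  set p1 : ℤ := 0 - (k1:ℤ) with hp1
  have hbadp1 : bad p1 := hbad1
  have ex2 : ∃ k : ℕ, k < hcLen n ∧ bad (p1 + hcLen n - k) := H (p1 + hcLen n)
  set k2 := Nat.find ex2 with hk2def
  have hk2 := Nat.find_spec ex2
  set p2 : ℤ := p1 + hcLen n - k2 with hp2
  have hp2bad : bad p2 := hk2.2
  have hp2le : p2 ≤ p1 + hcLen n := by omega
  have hp2gt : p1 < p2 := by have := hk2.1; omega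
  have hp2max : ∀ z : ℤ, p2 < z → z ≤ p1 + hcLen n → ¬ bad z := by
    intro z h1 h2 hb
    have hz : p1 + hcLen n - ((p1 + hcLen n - z).toNat) = z := by omega
    have hlt : (p1 + (hcLen n:ℤ) - z).toNat < k2 := by omega
    exact Nat.find_min ex2 hlt ⟨by omega, by rw [hz]; exact hb⟩
  have ex3 : ∃ k : ℕ, k < hcLen n ∧ bad (p2 + hcLen n - k) := H (p2 + hcLen n)
  set k3 := Nat.find ex3 with hk3def
  have hk3 := Nat.find_spec ex3
  set p3 : ℤ := p2 + hcLen n - k3 with hp3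
  have hp3bad : bad p3 := hk3.2
  have hp3le : p3 ≤ p2 + hcLen n := by omega
  have hp3gt : p2 < p3 := by have := hk3.1; omega
  have hp3far : p1 + hcLen n < p3 := by
    by_contra hcc
    exact hp2max p3 hp3gt (by omega) hp3bad
  -- coverage
  have hcov : ∀ x : Fin n, x ∈ hcSet n ((p1:ℤ):Fin n) ∨ x ∈ hcSet n ((p2:ℤ):Fin n) ∨
      x ∈ hcSet n ((p3:ℤ):Fin n) := by
    intro x
    set z : ℤ := p1 + ((x - ((p1:ℤ):Fin n)).val : ℤ) with hzdef
    have hzx : ((z:ℤ) : Fin n) = x := by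
      rw [hzdef]; push_cast [Fin.cast_val_eq_self]; ring
    have hzlb : p1 ≤ z := by
      have : (0:ℤ) ≤ ((x - ((p1:ℤ):Fin n)).val : ℤ) := Int.ofNat_nonneg _
      omega
    have hzub : z < p1 + n := by
      have := (x - ((p1:ℤ):Fin n)).isLt; omega
    have hmem : ∀ p : ℤ, p ≤ z → z < p + hcLen n → x ∈ hcSet n ((p:ℤ):Fin n) := by
      intro p h1 h2
      refine mem_hcSet_iff.2 ⟨(z - p).toNat, by omega, ?_⟩
      rw [← hzx]
      have hzp : (((z-p).toNat : ℕ) : ℤ) = z - p := by omega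
      have hcn : (((z-p).toNat : ℕ) : Fin n) = ((z - p : ℤ) : Fin n) := by
        conv_rhs => rw [← hzp]
        rw [Int.cast_natCast]
      rw [hcn]; push_cast; ring
    rcases lt_or_ge z p2 with h | h
    · exact Or.inl (hmem p1 hzlb (by omega))
    rcases lt_or_ge z p3 with h' | h'
    · exact Or.inr (Or.inl (hmem p2 h (by omega)))
    · exact Or.inr (Or.inr (hmem p3 h' (by omega)))
  have huniv : hcSet n ((p1:ℤ):Fin n) ∪ hcSet n ((p2:ℤ):Fin n) ∪ hcSet n ((p3:ℤ):Fin n)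
      = Finset.univ := by
    apply Finset.eq_univ_iff_forall.2
    intro x
    rcases hcov x with h | h | h <;> simp [Finset.mem_union, h]
  have htot : ∑ i, V i ≤ hcSum n V ((p1:ℤ):Fin n) + hcSum n V ((p2:ℤ):Fin n)
      + hcSum n V ((p3:ℤ):Fin n) := by
    calc ∑ i, V i
        = ∑ x ∈ (hcSet n ((p1:ℤ):Fin n) ∪ hcSet n ((p2:ℤ):Fin n) ∪ hcSet n ((p3:ℤ):Fin n)), V x := by
          rw [huniv]
      _ ≤ (∑ x ∈ hcSet n ((p1:ℤ):Fin n) ∪ hcSet n ((p2:ℤ):Fin n), V x)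
            + ∑ x ∈ hcSet n ((p3:ℤ):Fin n), V x := sum_union_le V hV _ _
      _ ≤ (∑ x ∈ hcSet n ((p1:ℤ):Fin n), V x) + (∑ x ∈ hcSet n ((p2:ℤ):Fin n), V x)
            + ∑ x ∈ hcSet n ((p3:ℤ):Fin n), V x := by
          have := sum_union_le V hV (hcSet n ((p1:ℤ):Fin n)) (hcSet n ((p2:ℤ):Fin n))
          linarith
      _ = _ := by rw [hcSum_eq_sum, hcSum_eq_sum, hcSum_eq_sum]
  have b1 : hcSum n V ((p1:ℤ):Fin n) < S3 := hbadp1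
  have b2 : hcSum n V ((p2:ℤ):Fin n) < S3 := hp2bad
  have b3 : hcSum n V ((p3:ℤ):Fin n) < S3 := hp3bad
  rw [hS3] at b1 b2 b3
  linarith



lemma fin_val_add_one {n : ℕ} [NeZero n] (x : Fin n) : (x+1).val = (x.val + 1) % n := by
  rw [Fin.add_def, Fin.val_one']
  exact Nat.add_mod_mod x.val 1 n

lemma adj_add_one {n : ℕ} [NeZero n] (x : Fin n) : adj n (x+1) x :=
  Or.inr (fin_val_add_one x).symm

lemma adj_sub_one {n : ℕ} [NeZero n] (x : Fin n) : adj n (x-1) x := by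
  refine Or.inl ?_
  have := fin_val_add_one (x - 1)
  rw [sub_add_cancel] at this
  exact this.symm

lemma adj_cases {n : ℕ} [NeZero n] {i j : Fin n} (h : adj n i j) : i = j + 1 ∨ i = j - 1 := by
  rcases h with h | h
  · right
    have h2 : (i + 1).val = j.val := by rw [fin_val_add_one]; exact h
    have h3 : i + 1 = j := Fin.val_injective h2
    rw [← h3]; ring
  · left
    have h2 : (j + 1).val = i.val := by rw [fin_val_add_one]; exact h
    exact (Fin.val_injective h2).symm


/-- Alice's zero-jump strategy with first move `a`. -/
def stratA (n : ℕ) [NeZero n] (a : Fin n) : List (Fin n) → Fin n := fun h =>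
  if hh : h = [] then a
  else if h.getLast hh + 1 ∈ h then h.getLast hh - 1 else h.getLast hh + 1

lemma isAlice_iff (k : ℕ) : isAlice k = true ↔ k % 2 = 0 := by simp [isAlice]

lemma take_ne_nil {n : ℕ} (l : List (Fin n)) (k : ℕ) (hk : k + 1 ≤ l.length) :
    l.take (k+1) ≠ [] := by
  intro hcontra
  have h2 : min (k+1) l.length = 0 := by
    simpa [List.length_take] using congrArg List.length hcontra
  omega

lemma getLast_take {n : ℕ} (l : List (Fin n)) (k : ℕ) (hk : k + 1 ≤ l.length) :
    (l.take (k+1)).getLast (take_ne_nil l k hk) = l.get ⟨k, by omega⟩ := by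
  rw [List.getLast_eq_getElem]
  have hlt : (l.take (k+1)).length = k+1 := by simp [List.length_take]; omega
  have h2 : (l.take (k+1)).length - 1 = k := by omega
  simp only [List.get_eq_getElem]
  rw [List.getElem_take]
  congr 1

lemma consistent_first {n : ℕ} [NeZero n] (a : Fin n) (l : List (Fin n))
    (hcons : Consistent n isAlice (stratA n a) l) (h0 : 0 < l.length) :
    l.get ⟨0, h0⟩ = a := by
  have := hcons 0 h0 (by simp [isAlice])
  simpa [stratA] using this

lemma consistent_step {n : ℕ} [NeZero n] (a : Fin n) (l : List (Fin n))
    (hcons : Consistent n isAlice (stratA n a) l) (k : ℕ) (hk : k + 1 < l.length)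
    (hpar : (k+1) % 2 = 0) :
    l.get ⟨k+1, hk⟩ = l.get ⟨k, Nat.lt_of_succ_lt hk⟩ + 1 ∨
    l.get ⟨k+1, hk⟩ = l.get ⟨k, Nat.lt_of_succ_lt hk⟩ - 1 := by
  have h := hcons (k+1) hk (by simp [isAlice, hpar])
  have hne : l.take (k+1) ≠ [] := take_ne_nil l k (by omega)
  have hlast : (l.take (k+1)).getLast hne = l.get ⟨k, Nat.lt_of_succ_lt hk⟩ :=
    getLast_take l k (by omega)
  rw [stratA] at h
  rw [dif_neg hne] at h
  by_cases hmem : (l.take (k+1)).getLast hne + 1 ∈ l.take (k+1)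
  · rw [if_pos hmem] at h
    right; rw [h, hlast]
  · rw [if_neg hmem] at h
    left; rw [h, hlast]



/-- invariant for the taken arc after `k+1` moves -/
def Spec (n : ℕ) [NeZero n] (l : List (Fin n)) (a : Fin n) (W : Prop) (k L R : ℕ) : Prop :=
  L + R = k ∧
  (∀ j (hj : j < l.length), j ≤ k → ∃ c : ℤ, -(R:ℤ) ≤ c ∧ c ≤ (L:ℤ) ∧
      l.get ⟨j, hj⟩ = a + (c : Fin n) ∧ (W → (c % 2 = 0 ↔ j % 2 = 0))) ∧
  (∀ c : ℤ, -(R:ℤ) ≤ c → c ≤ (L:ℤ) →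
      ∃ j, ∃ hj : j < l.length, j ≤ k ∧ l.get ⟨j, hj⟩ = a + (c : Fin n)) ∧
  (∀ hk : k < l.length, l.get ⟨k, hk⟩ = a + (((L:ℤ)) : Fin n) ∨
      l.get ⟨k, hk⟩ = a + ((-(R:ℤ) : ℤ) : Fin n)) ∧
  (W → k % 2 = 0 → L % 2 = 0 ∧ R % 2 = 0)

lemma specExtL {n : ℕ} [NeZero n] {l : List (Fin n)} {a : Fin n} {W : Prop} {k L R : ℕ}
    (hk1 : k + 1 < l.length)
    (hs : Spec n l a W k L R)
    (hnew : l.get ⟨k+1, hk1⟩ = a + (((L:ℤ)+1 : ℤ) : Fin n))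
    (hparnew : W → (((L:ℤ)+1) % 2 = 0 ↔ (k+1) % 2 = 0))
    (hP4new : W → (k+1) % 2 = 0 → (L+1) % 2 = 0 ∧ R % 2 = 0) :
    Spec n l a W (k+1) (L+1) R := by
  obtain ⟨hLR, hP1, hP2, hP3, hP4⟩ := hs
  refine ⟨by omega, ?_, ?_, ?_, hP4new⟩
  · intro j hj hjk
    rcases Nat.lt_or_ge j (k+1) with h | h
    · obtain ⟨c, h1, h2, h3, h4⟩ := hP1 j hj (by omega)
      exact ⟨c, by push_cast; omega, by push_cast; omega, h3, h4⟩
    · have : j = k + 1 := by omega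
      subst this
      refine ⟨(L:ℤ)+1, by push_cast; omega, by push_cast; omega, ?_, hparnew⟩
      exact hnew
  · intro c h1 h2
    rcases Int.lt_or_le (L:ℤ) c with h | h
    · have : c = (L:ℤ) + 1 := by push_cast at h2 ⊢; omega
      subst this
      exact ⟨k+1, hk1, le_refl _, hnew⟩
    · obtain ⟨j, hj, hjk, he⟩ := hP2 c (by push_cast at h1 ⊢; omega) h
      exact ⟨j, hj, by omega, he⟩
  · intro hk
    left
    have : (((L+1 : ℕ) : ℤ) : Fin n) = (((L:ℤ)+1 : ℤ) : Fin n) := by push_cast; ring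
    rw [this]
    exact hnew

lemma specExtR {n : ℕ} [NeZero n] {l : List (Fin n)} {a : Fin n} {W : Prop} {k L R : ℕ}
    (hk1 : k + 1 < l.length)
    (hs : Spec n l a W k L R)
    (hnew : l.get ⟨k+1, hk1⟩ = a + ((-(R:ℤ)-1 : ℤ) : Fin n))
    (hparnew : W → ((-(R:ℤ)-1) % 2 = 0 ↔ (k+1) % 2 = 0))
    (hP4new : W → (k+1) % 2 = 0 → L % 2 = 0 ∧ (R+1) % 2 = 0) :
    Spec n l a W (k+1) L (R+1) := by
  obtain ⟨hLR, hP1, hP2, hP3, hP4⟩ := hs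
  refine ⟨by omega, ?_, ?_, ?_, hP4new⟩
  · intro j hj hjk
    rcases Nat.lt_or_ge j (k+1) with h | h
    · obtain ⟨c, h1, h2, h3, h4⟩ := hP1 j hj (by omega)
      exact ⟨c, by push_cast; push_cast at h1; omega, h2, h3, h4⟩
    · have : j = k + 1 := by omega
      subst this
      refine ⟨-(R:ℤ)-1, by push_cast; omega, by push_cast; omega, ?_, hparnew⟩
      exact hnew
  · intro c h1 h2
    rcases Int.lt_or_le c (-(R:ℤ)) with h | h
    · have : c = -(R:ℤ) - 1 := by push_cast at h1 ⊢; omega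
      subst this
      exact ⟨k+1, hk1, le_refl _, hnew⟩
    · obtain ⟨j, hj, hjk, he⟩ := hP2 c h h2
      exact ⟨j, hj, by omega, he⟩
  · intro hk
    right
    have : ((-((R+1 : ℕ) : ℤ) : ℤ) : Fin n) = ((-(R:ℤ)-1 : ℤ) : Fin n) := by push_cast; ring
    rw [this]
    exact hnew

theorem struct (n : ℕ) [NeZero n] (l : List (Fin n)) (hv : ValidHist n l) (h0 : 0 < l.length)
    (W : Prop)
    (hW : W → ∀ (k : ℕ) (hk : k + 1 < l.length), (k+1) % 2 = 0 →
      l.get ⟨k+1, hk⟩ = l.get ⟨k, Nat.lt_of_succ_lt hk⟩ + 1 ∨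
      l.get ⟨k+1, hk⟩ = l.get ⟨k, Nat.lt_of_succ_lt hk⟩ - 1) :
    ∀ k, k < l.length → ∃ L R : ℕ, Spec n l (l.get ⟨0, h0⟩) W k L R := by
  have hlen : l.length ≤ n := by
    simpa using hv.1.length_le_card
  set a := l.get ⟨0, h0⟩ with ha
  intro k
  induction k with
  | zero =>
    intro _
    refine ⟨0, 0, rfl, ?_, ?_, ?_, fun _ _ => ⟨rfl, rfl⟩⟩
    · intro j hj hjk
      have : j = 0 := by omega
      subst this
      exact ⟨0, by norm_num, by norm_num, by simp [ha], fun _ => by norm_num⟩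
    · intro c h1 h2
      have : c = 0 := by omega
      subst this
      exact ⟨0, h0, le_refl _, by simp [ha]⟩
    · intro hk
      left; simp [ha]
  | succ k ih =>
    intro hk1
    obtain ⟨L, R, hspec⟩ := ih (by omega)
    obtain ⟨hLR, hP1, hP2, hP3, hP4⟩ := hspec
    have hLRz : (L:ℤ) + (R:ℤ) = (k:ℤ) := by exact_mod_cast hLR
    have hkn : (k:ℤ) + 1 < (n:ℤ) := by
      have : k + 1 < n := lt_of_lt_of_le hk1 hlen
      exact_mod_cast this
    -- freshness: the new element differs from all arc elements
    have fresh : ∀ c : ℤ, -(R:ℤ) ≤ c → c ≤ (L:ℤ) → l.get ⟨k+1, hk1⟩ ≠ a + (c : Fin n) := by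
      intro c h1 h2 he
      obtain ⟨j, hj, hjk, hje⟩ := hP2 c h1 h2
      have hgg : l.get ⟨k+1, hk1⟩ = l.get ⟨j, hj⟩ := by rw [he, hje]
      have := hv.1.get_inj_iff.1 hgg
      have : k + 1 = j := by simpa using congrArg Fin.val this
      omega
    -- geometry: the new element extends one of the two ends
    have geo : l.get ⟨k+1, hk1⟩ = a + (((L:ℤ)+1 : ℤ) : Fin n) ∨
        l.get ⟨k+1, hk1⟩ = a + ((-(R:ℤ)-1 : ℤ) : Fin n) := by
      obtain ⟨j, hj, hadj⟩ := hv.2 (k+1) hk1 (by omega)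
      obtain ⟨c, hc1, hc2, hce, -⟩ := hP1 j (hj.trans hk1) (by omega)
      rcases adj_cases hadj with he | he
      · have hval : l.get ⟨k+1, hk1⟩ = a + ((c+1 : ℤ) : Fin n) := by
          rw [he, hce]; push_cast; ring
        have hout : ¬(-(R:ℤ) ≤ c + 1 ∧ c + 1 ≤ (L:ℤ)) := by
          rintro ⟨u, v⟩; exact fresh (c+1) u v hval
        have : c + 1 = (L:ℤ) + 1 := by omega
        rw [this] at hval
        exact Or.inl hval
      · have hval : l.get ⟨k+1, hk1⟩ = a + ((c-1 : ℤ) : Fin n) := by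
          rw [he, hce]; push_cast; ring
        have hout : ¬(-(R:ℤ) ≤ c - 1 ∧ c - 1 ≤ (L:ℤ)) := by
          rintro ⟨u, v⟩; exact fresh (c-1) u v hval
        have : c - 1 = -(R:ℤ) - 1 := by omega
        rw [this] at hval
        exact Or.inr hval
    by_cases hw : W
    · rcases Nat.even_or_odd k with hke | hko
      · -- k even, move k+1 is Bob's: parity claims easy from hP4
        have hke' : k % 2 = 0 := Nat.even_iff.1 hke
        obtain ⟨hLe, hRe⟩ := hP4 hw hke'
        rcases geo with hnew | hnew
        · exact ⟨L+1, R, specExtL hk1 ⟨hLR, hP1, hP2, hP3, hP4⟩ hnew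
            (fun _ => by constructor <;> intro h <;> omega)
            (fun _ h => absurd h (by omega))⟩
        · exact ⟨L, R+1, specExtR hk1 ⟨hLR, hP1, hP2, hP3, hP4⟩ hnew
            (fun _ => by constructor <;> intro h <;> omega)
            (fun _ h => absurd h (by omega))⟩
      · -- k odd: move k+1 is Alice's, she extends the end where the last slice sits
        have hko' : k % 2 = 1 := Nat.odd_iff.1 hko
        have hWs := hW hw k hk1 (by omega)
        obtain ⟨ck, hck1, hck2, hcke, hckp⟩ := hP1 k (Nat.lt_of_succ_lt hk1) (le_refl k)
        have hckodd : ck % 2 = 1 := by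
          have := hckp hw
          omega
        rcases hP3 (Nat.lt_of_succ_lt hk1) with hend | hend
        · -- last slice at the left end a + L
          have hckL : ck = (L:ℤ) := by
            have : ((ck : ℤ) : Fin n) = (((L:ℤ)) : Fin n) := by
              have := hcke.symm.trans hend
              exact add_left_cancel this
            exact fin_intCast_eq_of_eq this (abs_lt.2 ⟨by omega, by omega⟩)
          have hLodd : (L:ℤ) % 2 = 1 := by omega
          have hnew : l.get ⟨k+1, hk1⟩ = a + (((L:ℤ)+1 : ℤ) : Fin n) := by
            rcases hWs with he | he
            · rw [he, hend]; push_cast; ring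
            · exfalso
              have hval : l.get ⟨k+1, hk1⟩ = a + (((L:ℤ)-1 : ℤ) : Fin n) := by
                rw [he, hend]; push_cast; ring
              exact fresh ((L:ℤ)-1) (by omega) (by omega) hval
          exact ⟨L+1, R, specExtL hk1 ⟨hLR, hP1, hP2, hP3, hP4⟩ hnew
            (fun _ => by constructor <;> intro h <;> omega)
            (fun _ _ => ⟨by omega, by omega⟩)⟩
        · -- last slice at the right end a - R
          have hckR : ck = -(R:ℤ) := by
            have : ((ck : ℤ) : Fin n) = ((-(R:ℤ) : ℤ) : Fin n) := by
              have := hcke.symm.trans hend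
              exact add_left_cancel this
            exact fin_intCast_eq_of_eq this (abs_lt.2 ⟨by omega, by omega⟩)
          have hRodd : (R:ℤ) % 2 = 1 := by omega
          have hnew : l.get ⟨k+1, hk1⟩ = a + ((-(R:ℤ)-1 : ℤ) : Fin n) := by
            rcases hWs with he | he
            · exfalso
              have hval : l.get ⟨k+1, hk1⟩ = a + ((-(R:ℤ)+1 : ℤ) : Fin n) := by
                rw [he, hend]; push_cast; ring
              exact fresh (-(R:ℤ)+1) (by omega) (by omega) hval
            · rw [he, hend]; push_cast; ring
          exact ⟨L, R+1, specExtR hk1 ⟨hLR, hP1, hP2, hP3, hP4⟩ hnew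
            (fun _ => by constructor <;> intro h <;> omega)
            (fun _ _ => ⟨by omega, by omega⟩)⟩
    · rcases geo with hnew | hnew
      · exact ⟨L+1, R, specExtL hk1 ⟨hLR, hP1, hP2, hP3, hP4⟩ hnew
          (fun hw' => absurd hw' hw) (fun hw' => absurd hw' hw)⟩
      · exact ⟨L, R+1, specExtR hk1 ⟨hLR, hP1, hP2, hP3, hP4⟩ hnew
          (fun hw' => absurd hw' hw) (fun hw' => absurd hw' hw)⟩



lemma gain_enumFrom {n : ℕ} [NeZero n] (P : Fin n → ℝ) (f : ℕ → Bool) :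
    ∀ (l : List (Fin n)) (i : ℕ),
    ((((l.zipIdx i).map Prod.swap).filter (fun p => f p.1)).map (fun p => P p.2)).sum
      = ∑ k ∈ Finset.range l.length, if f (i + k) then P (l.getD k 0) else 0 := by
  intro l
  induction l with
  | nil => intro i; simp
  | cons x t ih =>
    intro i
    rw [List.zipIdx_cons, List.map_cons, List.filter_cons]
    have hrhs : (∑ k ∈ Finset.range (x :: t).length, if f (i + k) then P ((x :: t).getD k 0) else 0)
        = (if f i then P x else 0)
          + ∑ k ∈ Finset.range t.length, (if f ((i+1) + k) then P (t.getD k 0) else 0) := by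
      rw [List.length_cons, Finset.sum_range_succ']
      rw [add_comm]
      congr 1
      apply Finset.sum_congr rfl
      intro k _
      have h1 : i + (k + 1) = (i + 1) + k := by omega
      rw [h1, List.getD_cons_succ]
    rw [hrhs, ← ih (i+1)]
    rcases hb : f i with _ | _
    · simp [hb]
    · simp [hb]

lemma gainOn_eq_sum {n : ℕ} [NeZero n] (P : Fin n → ℝ) (f : ℕ → Bool) (l : List (Fin n)) :
    gainOn n P f l = ∑ k ∈ Finset.range l.length, if f k then P (l.getD k 0) else 0 := by
  rw [gainOn, gain_enumFrom]
  simp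

lemma gainOn_eq_sum_image {n : ℕ} [NeZero n] (P : Fin n → ℝ) (f : ℕ → Bool) (l : List (Fin n))
    (hnd : l.Nodup) :
    gainOn n P f l
      = ∑ x ∈ ((Finset.range l.length).filter (fun k => f k)).image (fun k => l.getD k 0), P x := by
  rw [gainOn_eq_sum, ← Finset.sum_filter]
  refine (Finset.sum_image ?_).symm
  intro k1 hk1 k2 hk2 h
  have hk1' : k1 < l.length := Finset.mem_range.1 (Finset.mem_filter.1 hk1).1
  have hk2' : k2 < l.length := Finset.mem_range.1 (Finset.mem_filter.1 hk2).1
  dsimp only at h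
  rw [List.getD_eq_get _ _ ⟨k1, hk1'⟩, List.getD_eq_get _ _ ⟨k2, hk2'⟩] at h
  have := hnd.get_inj_iff.1 h
  simpa using congrArg Fin.val this

lemma gainOn_total {n : ℕ} [NeZero n] (P : Fin n → ℝ) (l : List (Fin n)) (hnd : l.Nodup)
    (hlen : l.length = n) (f g : ℕ → Bool)
    (hfg : ∀ k, (f k = true ∧ g k = false) ∨ (f k = false ∧ g k = true)) :
    gainOn n P f l + gainOn n P g l = ∑ i, P i := by
  rw [gainOn_eq_sum, gainOn_eq_sum, ← Finset.sum_add_distrib]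
  have h1 : ∀ k ∈ Finset.range l.length,
      ((if f k then P (l.getD k 0) else 0) + (if g k then P (l.getD k 0) else 0))
        = P (l.getD k 0) := by
    intro k _
    rcases hfg k with ⟨h1, h2⟩ | ⟨h1, h2⟩ <;> simp [h1, h2]
  rw [Finset.sum_congr rfl h1, Finset.sum_range (fun k => P (l.getD k 0))]
  have h2 : ∀ k : Fin l.length, P (l.getD k.1 0) = P (l.get k) := by
    intro k; rw [List.getD_eq_get _ _ k]
  rw [Finset.sum_congr rfl (fun k _ => h2 k)]
  have hinj : Function.Injective (fun k : Fin l.length => l.get k) := fun k1 k2 h =>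
    hnd.get_inj_iff.1 h
  have hbij : Function.Bijective (fun k : Fin l.length => l.get k) := by
    rw [Fintype.bijective_iff_injective_and_card]
    exact ⟨hinj, by simp [hlen]⟩
  exact Fintype.sum_bijective _ hbij _ _ (fun k => rfl)

lemma jumpCount_eq_zero {n : ℕ} [NeZero n] (f : ℕ → Bool) (l : List (Fin n))
    (h : ∀ (k : ℕ) (hk : k + 1 < l.length), f (k+1) = true →
      adj n (l.get ⟨k+1, hk⟩) (l.get ⟨k, Nat.lt_of_succ_lt hk⟩)) :
    jumpCount n f l = 0 := by
  rw [jumpCount, List.length_eq_zero_iff, List.filter_eq_nil_iff]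
  intro p hp
  obtain ⟨q, hq, hqp⟩ := List.mem_map.1 hp
  have hp : (l.zip l.tail)[p.1]? = some p.2 := by
    rw [← hqp]; exact List.mem_zipIdx_iff_getElem?.1 hq
  have hlt : p.1 < (l.zip l.tail).length := by
    by_contra hc
    rw [List.getElem?_eq_none (by omega)] at hp
    simp at hp
  have hp2 : p.2 = (l.zip l.tail)[p.1] := by
    rw [List.getElem?_eq_getElem hlt] at hp
    exact (Option.some_injective _ hp).symm
  have hlt1 : p.1 + 1 < l.length := by
    rw [List.length_zip, List.length_tail] at hlt
    omega
  have hz : (l.zip l.tail)[p.1]'hlt = (l[p.1]'(by omega), l.tail[p.1]'(by rw [List.length_tail]; omega)) :=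
    List.getElem_zip ..
  have ht : l.tail[p.1]'(by rw [List.length_tail]; omega) = l[p.1+1] := List.getElem_tail ..
  simp only [Bool.and_eq_true, Bool.not_eq_true', decide_eq_false_iff_not, not_and, not_not]
  intro hf
  have := h p.1 hlt1 hf
  rw [hp2, hz, ht]
  simpa [List.get_eq_getElem] using this



lemma stratA_legal (n : ℕ) [NeZero n] (a : Fin n) : Legal n isAlice (stratA n a) := by
  intro h hv hlen hf
  by_cases hh : h = []
  · subst hh
    exact ⟨by simp, Or.inl rfl⟩
  · have h0 : 0 < h.length := List.length_pos_iff.2 hh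
    have heven : h.length % 2 = 0 := by simpa [isAlice] using hf
    have hlen2 : 2 ≤ h.length := by omega
    obtain ⟨L, R, hLR, hP1, hP2, hP3, hP4⟩ :=
      struct n h hv h0 False (fun f => f.elim) (h.length - 1) (by omega)
    have hLRz : (L:ℤ) + R = (h.length:ℤ) - 1 := by
      have h1 : ((L + R : ℕ) : ℤ) = ((h.length - 1 : ℕ) : ℤ) := by rw [hLR]
      push_cast at h1
      omega
    have hlnz : (h.length : ℤ) < (n:ℤ) := by exact_mod_cast hlen
    have hglast : h.getLast hh = h.get ⟨h.length - 1, by omega⟩ := by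
      rw [List.getLast_eq_getElem]
      simp [List.get_eq_getElem]
    have hxmem : h.getLast hh ∈ h := List.getLast_mem hh
    rcases hP3 (by omega) with hend | hend
    · -- last slice at the left end : the move x+1 is fresh
      have hx1 : h.getLast hh + 1 = h.get ⟨0, h0⟩ + (((L:ℤ)+1 : ℤ) : Fin n) := by
        rw [hglast, hend]; push_cast; ring
      have hnot : h.getLast hh + 1 ∉ h := by
        intro hmem
        obtain ⟨⟨j, hj⟩, hje⟩ := List.mem_iff_get.1 hmem
        obtain ⟨c, hb1, hb2, hbe, -⟩ := hP1 j hj (by omega)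
        have hcast : (((L:ℤ)+1 : ℤ) : Fin n) = ((c:ℤ) : Fin n) :=
          add_left_cancel (hx1.symm.trans (hje.symm.trans hbe))
        have := fin_intCast_eq_of_eq hcast (abs_lt.2 ⟨by omega, by omega⟩)
        omega
      rw [stratA]
      rw [dif_neg hh, if_neg hnot]
      exact ⟨hnot, Or.inr ⟨h.getLast hh, hxmem, adj_add_one _⟩⟩
    · -- last slice at the right end
      have hR1 : 1 ≤ R := by
        by_contra hR0
        have hR00 : R = 0 := by omega
        have he0 : h.get ⟨h.length - 1, by omega⟩ = h.get ⟨0, h0⟩ := by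
          rw [hend, hR00]
          norm_num
        have hinj := hv.1.get_inj_iff.1 he0
        have := congrArg Fin.val hinj
        simp at this
        omega
      have hmem1 : h.getLast hh + 1 ∈ h := by
        obtain ⟨j, hj, hjk, hje⟩ := hP2 (-(R:ℤ)+1) (by omega) (by omega)
        have he1 : h.getLast hh + 1 = h.get ⟨j, hj⟩ := by
          rw [hglast, hend, hje]; push_cast; ring
        rw [he1]
        exact List.get_mem ..
      have hnot : h.getLast hh - 1 ∉ h := by
        intro hmem
        obtain ⟨⟨j, hj⟩, hje⟩ := List.mem_iff_get.1 hmem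
        obtain ⟨c, hb1, hb2, hbe, -⟩ := hP1 j hj (by omega)
        have hx1 : h.getLast hh - 1 = h.get ⟨0, h0⟩ + ((-(R:ℤ)-1 : ℤ) : Fin n) := by
          rw [hglast, hend]; push_cast; ring
        have hcast : ((-(R:ℤ)-1 : ℤ) : Fin n) = ((c:ℤ) : Fin n) :=
          add_left_cancel (hx1.symm.trans (hje.symm.trans hbe))
        have := fin_intCast_eq_of_eq hcast (abs_lt.2 ⟨by omega, by omega⟩)
        omega
      rw [stratA]
      rw [dif_neg hh, if_pos hmem1]
      exact ⟨hnot, Or.inr ⟨h.getLast hh, hxmem, adj_sub_one _⟩⟩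

lemma play_jump {n : ℕ} [NeZero n] (a : Fin n) (l : List (Fin n))
    (hcons : Consistent n isAlice (stratA n a) l) : jumpCount n isAlice l = 0 := by
  refine jumpCount_eq_zero _ _ (fun k hk hf => ?_)
  rcases consistent_step a l hcons k hk (by simpa [isAlice] using hf) with he | he
  · rw [he]; exact adj_add_one _
  · rw [he]; exact adj_sub_one _

lemma alice_gain_ge {n : ℕ} [NeZero n] (P : Fin n → ℝ) (hP : ∀ i, 0 ≤ P i) (a : Fin n)
    (l : List (Fin n)) (hv : ValidHist n l) (hlen : l.length = n)
    (hcons : Consistent n isAlice (stratA n a) l) :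
    ∃ L R : ℕ, L + R = n - 1 ∧ ((n-1) % 2 = 0 → L % 2 = 0 ∧ R % 2 = 0) ∧
      ∀ AE : Finset (Fin n),
        (∀ x ∈ AE, ∃ c : ℤ, c % 2 = 0 ∧ -(R:ℤ) ≤ c ∧ c ≤ (L:ℤ) ∧ x = a + (c : Fin n)) →
        ∑ x ∈ AE, P x ≤ aliceGain n P l := by
  have hn : 0 < n := n.pos_of_neZero
  have h0 : 0 < l.length := by omega
  have hW : True → ∀ (k : ℕ) (hk : k + 1 < l.length), (k+1) % 2 = 0 →
      l.get ⟨k+1, hk⟩ = l.get ⟨k, Nat.lt_of_succ_lt hk⟩ + 1 ∨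
      l.get ⟨k+1, hk⟩ = l.get ⟨k, Nat.lt_of_succ_lt hk⟩ - 1 :=
    fun _ k hk hp => consistent_step a l hcons k hk hp
  obtain ⟨L, R, hLR, hP1, hP2, hP3, hP4⟩ := struct n l hv h0 True hW (n-1) (by omega)
  have ha : l.get ⟨0, h0⟩ = a := consistent_first a l hcons h0
  refine ⟨L, R, hLR, hP4 trivial, ?_⟩
  intro AE hAE
  rw [aliceGain, gainOn_eq_sum_image P isAlice l hv.1]
  refine Finset.sum_le_sum_of_subset_of_nonneg ?_ (fun x _ _ => hP x)
  intro x hx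
  obtain ⟨c, hc0, hc1, hc2, hc3⟩ := hAE x hx
  obtain ⟨j, hj, hjk, hje⟩ := hP2 c hc1 hc2
  obtain ⟨c', hc1', hc2', hce', hcp'⟩ := hP1 j hj hjk
  have hLRz : (L:ℤ) + (R:ℤ) = ((n:ℤ) - 1) := by
    have h1 : ((L + R : ℕ) : ℤ) = ((n - 1 : ℕ) : ℤ) := by rw [hLR]
    push_cast at h1
    omega
  have hcc : c = c' := by
    have hcast : ((c : ℤ) : Fin n) = ((c' : ℤ) : Fin n) := by
      have := hje.symm.trans hce'
      exact add_left_cancel this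
    exact fin_intCast_eq_of_eq hcast (abs_lt.2 ⟨by omega, by omega⟩)
  have hjeven : j % 2 = 0 := by
    have := hcp' trivial
    omega
  apply Finset.mem_image.2
  refine ⟨j, Finset.mem_filter.2 ⟨Finset.mem_range.2 hj, by simp [isAlice, hjeven]⟩, ?_⟩
  rw [List.getD_eq_get _ _ ⟨j, hj⟩, hje, ha, hc3]

lemma two_mul_bij {n : ℕ} [NeZero n] (hodd : Odd n) :
    Function.Bijective (fun k : Fin n => 2 * k) := by
  have hodd' : n % 2 = 1 := Nat.odd_iff.1 hodd
  rw [Fintype.bijective_iff_injective_and_card]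
  refine ⟨?_, rfl⟩
  have h2 : (((n+1)/2 : ℕ) : Fin n) * 2 = 1 := by
    have h1 : (((n+1)/2 * 2 : ℕ) : Fin n) = ((n + 1 : ℕ) : Fin n) := by
      congr 1; omega
    push_cast at h1
    rw [Fin.natCast_self] at h1
    simpa using h1
  have hinv : ∀ z : Fin n, (((n+1)/2 : ℕ) : Fin n) * (2 * z) = z := by
    intro z
    rw [← mul_assoc, h2, one_mul]
  intro x y hxy
  simp only at hxy
  calc x = (((n+1)/2 : ℕ) : Fin n) * (2 * x) := (hinv x).symm
    _ = (((n+1)/2 : ℕ) : Fin n) * (2 * y) := by rw [hxy]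
    _ = y := hinv y

end PizzaAux

/-- Alice always has a zero-jump strategy with gain `|P|/3`;
for odd `n` this comes from `p(V) ≥ |V|/3` for the characteristic cycle
`V(k) = P(2k mod n)`. -/
theorem alice_zero_jump_third (n : ℕ) (hn : 0 < n) [NeZero n]
    (P : Fin n → ℝ) (hP : ∀ i, 0 ≤ P i) :
    (Odd n → (∑ i, P i) / 3 ≤ potV n (fun k => P (2 * k))) ∧
    AliceJGain n P 0 ((∑ i, P i) / 3) := by
  open Fin.CommRing in
  have hsum0 : 0 ≤ ∑ i, P i := Finset.sum_nonneg (fun i _ => hP i)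
  constructor
  · -- Part 1 : p(V) ≥ |V|/3 for odd n
    intro hodd
    set V : Fin n → ℝ := fun k => P (2 * k) with hVdef
    have hV0 : ∀ i, 0 ≤ V i := fun i => hP _
    have hsumV : ∑ i, V i = ∑ i, P i :=
      Fintype.sum_bijective _ (PizzaAux.two_mul_bij hodd) _ _ (fun i => rfl)
    obtain ⟨w, hw⟩ := PizzaAux.exists_good n V hV0
    have hmemself : ∀ v : Fin n, v ∈ hcSet n v := by
      intro v
      exact PizzaAux.mem_hcSet_iff.2 ⟨0, by unfold hcLen; omega, by simp⟩
    have hbddb : ∀ v : Fin n,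
        BddBelow {x : ℝ | ∃ s : Fin n, v ∈ hcSet n s ∧ x = hcSum n V s} := by
      intro v
      refine ⟨0, ?_⟩
      rintro b ⟨s, hs, rfl⟩
      show (0:ℝ) ≤ ∑ k ∈ Finset.range (hcLen n), V (s + (k : Fin n))
      exact Finset.sum_nonneg (fun i _ => hV0 _)
    have hpotw : (∑ i, P i)/3 ≤ pot n V w := by
      show (∑ i, P i)/3 ≤ sInf {x : ℝ | ∃ s : Fin n, w ∈ hcSet n s ∧ x = hcSum n V s}
      refine le_csInf ⟨hcSum n V w, w, hmemself w, rfl⟩ ?_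
      rintro b ⟨s, hs, rfl⟩
      have := hw s hs
      rwa [hsumV] at this
    have hbdda : BddAbove {x : ℝ | ∃ v : Fin n, x = pot n V v} := by
      refine ⟨∑ i, V i, ?_⟩
      rintro b ⟨v, rfl⟩
      have h1 : pot n V v ≤ hcSum n V v := csInf_le (hbddb v) ⟨v, hmemself v, rfl⟩
      have h2 : hcSum n V v ≤ ∑ i, V i := by
        rw [← PizzaAux.hcSum_eq_sum]
        exact Finset.sum_le_sum_of_subset_of_nonneg (Finset.subset_univ _) (fun i _ _ => hV0 i)
      linarith
    have hfin : pot n V w ≤ potV n V := le_csSup hbdda ⟨w, rfl⟩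
    linarith
  · -- Part 2 : the zero-jump strategy
    rcases Nat.even_or_odd n with hev | hodd
    · -- n even
      have hev' : n % 2 = 0 := Nat.even_iff.1 hev
      have hn2 : 2 ≤ n := by omega
      obtain ⟨a, hcl⟩ : ∃ a : Fin n,
          (∑ i, P i)/2 ≤ ∑ x ∈ Finset.univ.filter (fun x : Fin n => x.1 % 2 = a.1 % 2), P x := by
        have hsplit : ∑ x ∈ Finset.univ.filter (fun x : Fin n => x.1 % 2 = 0), P x
            + ∑ x ∈ Finset.univ.filter (fun x : Fin n => ¬(x.1 % 2 = 0)), P x = ∑ i, P i :=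
          Finset.sum_filter_add_sum_filter_not _ _ _
        by_cases h01 : (∑ i, P i)/2
            ≤ ∑ x ∈ Finset.univ.filter (fun x : Fin n => x.1 % 2 = 0), P x
        · refine ⟨0, ?_⟩
          have hv0 : (0 : Fin n).1 % 2 = 0 := by simp
          convert h01 using 3 <;> simp [hv0]
        · refine ⟨1, ?_⟩
          have hv1 : (1 : Fin n).1 % 2 = 1 := by
            have h1n : (1:ℕ) % n = 1 := Nat.mod_eq_of_lt hn2
            rw [Fin.val_one', h1n]
          push_neg at h01
          have hco : Finset.univ.filter (fun x : Fin n => x.1 % 2 = (1 : Fin n).1 % 2)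
              = Finset.univ.filter (fun x : Fin n => ¬(x.1 % 2 = 0)) := by
            apply Finset.filter_congr
            intro x _
            simp only [hv1, eq_iff_iff]
            omega
          rw [hco]
          linarith
      refine ⟨PizzaAux.stratA n a, PizzaAux.stratA_legal n a, ?_⟩
      intro l hv hlen hcons
      obtain ⟨L, R, hLR, hpar, hbound⟩ := PizzaAux.alice_gain_ge P hP a l hv hlen hcons
      have hLRz : (L:ℤ) + R = (n:ℤ) - 1 := by
        have h1 : ((L+R:ℕ):ℤ) = ((n-1:ℕ):ℤ) := by rw [hLR]
        push_cast at h1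
        omega
      refine ⟨?_, (PizzaAux.play_jump a l hcons).le⟩
      have hmemprop : ∀ x ∈ Finset.univ.filter (fun x : Fin n => x.1 % 2 = a.1 % 2),
          ∃ c : ℤ, c % 2 = 0 ∧ -(R:ℤ) ≤ c ∧ c ≤ (L:ℤ) ∧ x = a + (c : Fin n) := by
        intro x hx
        have hxp : x.1 % 2 = a.1 % 2 := (Finset.mem_filter.1 hx).2
        set y := x - a + ((R:ℕ) : Fin n) with hy
        set c : ℤ := (y.val : ℤ) - R with hc
        have hvy : (y.val : ℤ) < n := by exact_mod_cast y.isLt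
        have hvy0 : (0:ℤ) ≤ (y.val : ℤ) := Int.ofNat_nonneg _
        have hcastc : (c : Fin n) = x - a := by
          have h1 : ((c : ℤ) : Fin n)
              = (((y.val : ℕ) : ℤ) : Fin n) - (((R:ℕ) : ℤ) : Fin n) := by
            rw [hc]; push_cast; ring
          rw [h1, Int.cast_natCast, Int.cast_natCast, Fin.cast_val_eq_self, hy]
          ring
        have hxeq : x = a + (c : Fin n) := by rw [hcastc]; ring
        have hdvd : (n:ℤ) ∣ ((x.1 : ℤ) - (a.1 : ℤ) - c) := by
          rw [← CharP.intCast_eq_zero_iff (Fin n) n]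
          push_cast [Fin.cast_val_eq_self]
          rw [hcastc]
          ring
        obtain ⟨t, ht⟩ := hdvd
        have hpar2 : ((x.1:ℤ) - (a.1:ℤ) - c) % 2 = 0 := by
          rw [ht, Int.mul_emod]
          have hn2z : (n:ℤ) % 2 = 0 := by omega
          rw [hn2z]
          simp
        have hxaz : (x.1 : ℤ) % 2 = (a.1 : ℤ) % 2 := by omega
        exact ⟨c, by omega, by omega, by omega, hxeq⟩
      have hsub := hbound _ hmemprop
      linarith
    · -- n odd
      have hodd' : n % 2 = 1 := Nat.odd_iff.1 hodd
      set V : Fin n → ℝ := fun k => P (2 * k) with hVdef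
      have hV0 : ∀ i, 0 ≤ V i := fun i => hP _
      have hsumV : ∑ i, V i = ∑ i, P i :=
        Fintype.sum_bijective _ (PizzaAux.two_mul_bij hodd) _ _ (fun i => rfl)
      obtain ⟨w, hw⟩ := PizzaAux.exists_good n V hV0
      refine ⟨PizzaAux.stratA n (2 * w), PizzaAux.stratA_legal n (2 * w), ?_⟩
      intro l hv hlen hcons
      obtain ⟨L, R, hLR, hpar, hbound⟩ := PizzaAux.alice_gain_ge P hP (2*w) l hv hlen hcons
      obtain ⟨hLe, hRe⟩ := hpar (by omega)
      refine ⟨?_, (PizzaAux.play_jump _ l hcons).le⟩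
      have h2hc : 2 * hcLen n = n + 1 := by unfold hcLen; omega
      obtain ⟨r2, hr2⟩ : ∃ r2, R = 2 * r2 := ⟨R/2, by omega⟩
      subst hr2
      set st : Fin n := w - ((r2 : ℕ) : Fin n) with hst
      set AE : Finset (Fin n) := (Finset.range (hcLen n)).image
        (fun t : ℕ => 2*w + ((2*((t:ℤ) - ((r2 : ℕ) : ℤ)) : ℤ) : Fin n)) with hAE
      have hmemprop : ∀ x ∈ AE, ∃ c : ℤ, c % 2 = 0 ∧ -((2*r2 : ℕ):ℤ) ≤ c ∧ c ≤ (L:ℤ)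
          ∧ x = 2*w + (c : Fin n) := by
        intro x hx
        obtain ⟨t, htr, rfl⟩ := Finset.mem_image.1 hx
        have htl : t < hcLen n := Finset.mem_range.1 htr
        exact ⟨2*((t:ℤ) - ((r2:ℕ):ℤ)), by omega, by omega, by omega, rfl⟩
      have hsub := hbound AE hmemprop
      have hinj : ∀ t1 ∈ Finset.range (hcLen n), ∀ t2 ∈ Finset.range (hcLen n),
          2*w + ((2*((t1:ℤ) - ((r2 : ℕ) : ℤ)) : ℤ) : Fin n)
            = 2*w + ((2*((t2:ℤ) - ((r2 : ℕ) : ℤ)) : ℤ) : Fin n) → t1 = t2 := by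
        intro t1 h1 t2 h2 he
        have ht1 : t1 < hcLen n := Finset.mem_range.1 h1
        have ht2 : t2 < hcLen n := Finset.mem_range.1 h2
        have hc : ((2*((t1:ℤ) - ((r2:ℕ):ℤ)) : ℤ) : Fin n)
            = ((2*((t2:ℤ) - ((r2:ℕ):ℤ)) : ℤ) : Fin n) := add_left_cancel he
        have := PizzaAux.fin_intCast_eq_of_eq hc (abs_lt.2 ⟨by omega, by omega⟩)
        omega
      have hAEsum : ∑ x ∈ AE, P x = hcSum n V st := by
        rw [hAE, Finset.sum_image hinj]
        show _ = ∑ k ∈ Finset.range (hcLen n), V (st + (k : Fin n))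
        apply Finset.sum_congr rfl
        intro t htr
        have hpt : 2*w + ((2*((t:ℤ) - ((r2:ℕ):ℤ)) : ℤ) : Fin n)
            = 2 * (st + ((t:ℕ) : Fin n)) := by
          rw [hst]
          push_cast
          ring
        rw [hpt]
      have hwmem : w ∈ hcSet n st := by
        refine PizzaAux.mem_hcSet_iff.2 ⟨r2, by omega, ?_⟩
        rw [hst, sub_add_cancel]
      have hfinal := hw st hwmem
      rw [hsumV] at hfinal
      calc (∑ i, P i)/3 ≤ hcSum n V st := hfinal
        _ = ∑ x ∈ AE, P x := hAEsum.symm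
        _ ≤ aliceGain n P l := hsub
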